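/- For G = Ad(SL(n,ℝ)), the group G̃ = {g ∈ Ad(SL(n,ℂ)) : Ad(g) preserves sl(n,ℝ)} is isomorphic to SL(n,ℝ) if n is odd, and to Ad(SL(n,ℝ)^±) (the image of real matrices of determinant ±1 under Ad) if n is even. In particular G̃ is disconnected when n is even. -/

import Mathlib

/-- `g` (a unit of the complex `n×n` matrices) acts on `sl(n,ℝ)` by `Ad`:
conjugation of every real traceless matrix stays real. -/
def AdPreservesReal (n : ℕ) (g : (Matrix (Fin n) (Fin n) ℂ)ˣ) : Prop :=
  ∀ X : Matrix (Fin n) (Fin n) ℝ, Matrix.trace X = 0 →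
    ∃ Y : Matrix (Fin n) (Fin n) ℝ,
      (g : Matrix (Fin n) (Fin n) ℂ) * X.map Complex.ofReal *
          ((g⁻¹ : (Matrix (Fin n) (Fin n) ℂ)ˣ) : Matrix (Fin n) (Fin n) ℂ)
        = Y.map Complex.ofReal

/-- `g` is, up to a complex scalar, a real matrix with determinant in the
given set of allowed determinants. -/
def IsScalarTimesReal (n : ℕ) (g : (Matrix (Fin n) (Fin n) ℂ)ˣ) (dets : Set ℝ) : Prop :=
  ∃ (c : ℂ) (B : Matrix (Fin n) (Fin n) ℝ), B.det ∈ dets ∧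
    (g : Matrix (Fin n) (Fin n) ℂ) = c • B.map Complex.ofReal

open Matrix Complex

namespace Stmt7Aux

variable {n : ℕ}

lemma map_ofReal_mul (X Y : Matrix (Fin n) (Fin n) ℝ) :
    ((X * Y).map Complex.ofReal) = X.map Complex.ofReal * Y.map Complex.ofReal :=
  Matrix.map_mul (f := Complex.ofRealHom)

lemma conjMat_ofReal (X : Matrix (Fin n) (Fin n) ℝ) :
    (X.map Complex.ofReal).map (starRingEnd ℂ) = X.map Complex.ofReal := by
  ext i j
  simp [Matrix.map_apply, Complex.conj_ofReal]

lemma det_map_ofReal (B : Matrix (Fin n) (Fin n) ℝ) :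
    (B.map Complex.ofReal).det = (B.det : ℂ) := by
  exact (Complex.ofRealHom.map_det B).symm

/-- Backward direction: a scalar multiple of an invertible real matrix preserves
real matrices under conjugation. -/
lemma adPreserves_of_scalarReal (g : (Matrix (Fin n) (Fin n) ℂ)ˣ) (c : ℂ)
    (B : Matrix (Fin n) (Fin n) ℝ) (hB : IsUnit B.det)
    (hg : (g : Matrix (Fin n) (Fin n) ℂ) = c • B.map Complex.ofReal) :
    AdPreservesReal n g := by
  intro X _
  refine ⟨B * X * B⁻¹, ?_⟩
  have h1 : (g : Matrix (Fin n) (Fin n) ℂ) * X.map Complex.ofReal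
      = (B * X * B⁻¹).map Complex.ofReal * g := by
    rw [hg, smul_mul_assoc, mul_smul_comm]
    congr 1
    rw [← map_ofReal_mul, ← map_ofReal_mul]
    rw [Matrix.mul_assoc (B * X), Matrix.nonsing_inv_mul _ hB, Matrix.mul_one]
  calc (g : Matrix (Fin n) (Fin n) ℂ) * X.map Complex.ofReal * ((g⁻¹ : _ˣ) : Matrix (Fin n) (Fin n) ℂ)
      = (B * X * B⁻¹).map Complex.ofReal * ((g : Matrix (Fin n) (Fin n) ℂ) * ((g⁻¹ : _ˣ) : Matrix (Fin n) (Fin n) ℂ)) := by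
        rw [h1, Matrix.mul_assoc]
    _ = (B * X * B⁻¹).map Complex.ofReal := by rw [g.mul_inv, Matrix.mul_one]

lemma scalar_of_commute (M : Matrix (Fin n) (Fin n) ℂ)
    (h : ∀ X : Matrix (Fin n) (Fin n) ℝ, Matrix.trace X = 0 →
      M * X.map Complex.ofReal = X.map Complex.ofReal * M) :
    ∃ a : ℂ, M = a • 1 := by
  have key : Pairwise fun i j : Fin n => Commute (single i j 1) M := by
    intro i j hij
    have hmap : (single i j (1:ℝ)).map Complex.ofReal
        = single i j (1:ℂ) := by
      ext k l
      simp [Matrix.map_apply, Matrix.single, apply_ite Complex.ofReal]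
    have htr : Matrix.trace (single i j (1:ℝ)) = 0 :=
      Matrix.trace_single_eq_of_ne i j (1:ℝ) hij
    have := h _ htr
    rw [hmap] at this
    exact (this).symm
  obtain ⟨a, ha⟩ := Matrix.mem_range_scalar_of_commute_single key
  refine ⟨a, ?_⟩
  rw [← ha, Matrix.scalar_apply]
  ext i j
  by_cases hij : i = j <;> simp [hij, Matrix.one_apply]

lemma pos_pow_eq_one {x : ℝ} (hx : 0 ≤ x) {m : ℕ} (hm : m ≠ 0) (h : x ^ m = 1) : x = 1 := by
  rcases lt_trichotomy x 1 with h1 | h1 | h1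
  · have := pow_lt_one₀ hx h1 hm; linarith
  · exact h1
  · have := one_lt_pow₀ h1 hm; linarith

/-- Forward direction. -/
lemma scalarReal_of_adPreserves (hn : 1 ≤ n) (g : (Matrix (Fin n) (Fin n) ℂ)ˣ)
    (hdet : Matrix.det (g : Matrix (Fin n) (Fin n) ℂ) = 1) (h : AdPreservesReal n g) :
    IsScalarTimesReal n g ({1, -1} : Set ℝ) := by
  have hn0 : n ≠ 0 := by omega
  set f : Matrix (Fin n) (Fin n) ℂ →+* Matrix (Fin n) (Fin n) ℂ :=
    RingHom.mapMatrix (starRingEnd ℂ) with hf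
  set gb : (Matrix (Fin n) (Fin n) ℂ)ˣ := Units.map f.toMonoidHom g with hgbdef
  have hgb : (gb : Matrix (Fin n) (Fin n) ℂ) = (g : Matrix (Fin n) (Fin n) ℂ).map (starRingEnd ℂ) := rfl
  have hgbinv : ((gb⁻¹ : _ˣ) : Matrix (Fin n) (Fin n) ℂ)
      = ((g⁻¹ : _ˣ) : Matrix (Fin n) (Fin n) ℂ).map (starRingEnd ℂ) := by
    rw [hgbdef, ← map_inv (Units.map f.toMonoidHom) g]; rfl
  -- the commutation
  have hcomm : ∀ X : Matrix (Fin n) (Fin n) ℝ, Matrix.trace X = 0 →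
      ((gb⁻¹ : _ˣ) * (g : Matrix (Fin n) (Fin n) ℂ)) * X.map Complex.ofReal
        = X.map Complex.ofReal * ((gb⁻¹ : _ˣ) * (g : Matrix (Fin n) (Fin n) ℂ)) := by
    intro X hX
    obtain ⟨Y, hY⟩ := h X hX
    have hY' : (gb : Matrix (Fin n) (Fin n) ℂ) * X.map Complex.ofReal * ((gb⁻¹ : _ˣ) : Matrix (Fin n) (Fin n) ℂ)
        = Y.map Complex.ofReal := by
      rw [hgb, hgbinv, ← conjMat_ofReal X, ← Matrix.map_mul (f := starRingEnd ℂ),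
        ← Matrix.map_mul (f := starRingEnd ℂ), hY, conjMat_ofReal]
    have key : (g : Matrix (Fin n) (Fin n) ℂ) * X.map Complex.ofReal * ((g⁻¹ : _ˣ) : Matrix (Fin n) (Fin n) ℂ)
        = (gb : Matrix (Fin n) (Fin n) ℂ) * X.map Complex.ofReal * ((gb⁻¹ : _ˣ) : Matrix (Fin n) (Fin n) ℂ) :=
      hY.trans hY'.symm
    have h2 := congrArg (fun Z => ((gb⁻¹ : _ˣ) : Matrix (Fin n) (Fin n) ℂ) * Z * (g : Matrix (Fin n) (Fin n) ℂ)) key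
    simp only [mul_assoc] at h2 ⊢
    rw [Units.inv_mul_cancel_left] at h2
    calc ((gb⁻¹ : _ˣ) : Matrix (Fin n) (Fin n) ℂ) * ((g : Matrix (Fin n) (Fin n) ℂ) * X.map Complex.ofReal)
        = ((gb⁻¹ : _ˣ) : Matrix (Fin n) (Fin n) ℂ) * ((g : Matrix (Fin n) (Fin n) ℂ) * (X.map Complex.ofReal *
            (((g⁻¹ : _ˣ) : Matrix (Fin n) (Fin n) ℂ) * (g : Matrix (Fin n) (Fin n) ℂ)))) := by
          rw [Units.inv_mul, mul_one]
      _ = X.map Complex.ofReal * (((gb⁻¹ : _ˣ) : Matrix (Fin n) (Fin n) ℂ) * (g : Matrix (Fin n) (Fin n) ℂ)) := by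
          rw [h2]
  obtain ⟨a, ha⟩ := scalar_of_commute _ hcomm
  -- ↑g = a • ↑gb
  have h3 : (gb : Matrix (Fin n) (Fin n) ℂ) * (((gb⁻¹ : _ˣ) : Matrix (Fin n) (Fin n) ℂ) * (g : Matrix (Fin n) (Fin n) ℂ))
      = (g : Matrix (Fin n) (Fin n) ℂ) := by
    rw [← mul_assoc, Units.mul_inv, one_mul]
  have hga : (g : Matrix (Fin n) (Fin n) ℂ) = a • (gb : Matrix (Fin n) (Fin n) ℂ) := by
    calc (g : Matrix (Fin n) (Fin n) ℂ)
        = (gb : Matrix (Fin n) (Fin n) ℂ) * (((gb⁻¹ : _ˣ) : Matrix (Fin n) (Fin n) ℂ) * (g : Matrix (Fin n) (Fin n) ℂ)) := h3.symm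
      _ = (gb : Matrix (Fin n) (Fin n) ℂ) * (a • 1) := by rw [ha]
      _ = a • (gb : Matrix (Fin n) (Fin n) ℂ) := by rw [mul_smul_comm, mul_one]
  -- det gb = 1, so a ^ n = 1
  have hdetgb : Matrix.det (gb : Matrix (Fin n) (Fin n) ℂ) = 1 := by
    rw [hgb]
    have h4 := (RingHom.map_det (starRingEnd ℂ) (g : Matrix (Fin n) (Fin n) ℂ)).symm
    rw [RingHom.mapMatrix_apply] at h4
    rw [h4, hdet, RingHom.map_one]
  have han : a ^ n = 1 := by
    have := congrArg Matrix.det hga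
    rw [hdet, Matrix.det_smul, hdetgb, mul_one, Fintype.card_fin] at this
    exact this.symm
  have habs : ‖a‖ = 1 := by
    refine pos_pow_eq_one (norm_nonneg a) hn0 ?_
    rw [← norm_pow, han, norm_one]
  have hamul : a * (starRingEnd ℂ) a = 1 := by
    rw [Complex.mul_conj]
    norm_cast
    rw [Complex.normSq_eq_norm_sq, habs]; norm_num
  -- choose c with c ^ 2 = conj a
  obtain ⟨c, hc⟩ := IsAlgClosed.exists_pow_nat_eq ((starRingEnd ℂ) a) (n := 2) (by norm_num)
  have hcabs : ‖c‖ = 1 := by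
    refine pos_pow_eq_one (norm_nonneg c) (two_ne_zero) ?_
    rw [← norm_pow, hc, Complex.norm_conj, habs]
  have hcmul : c * (starRingEnd ℂ) c = 1 := by
    rw [Complex.mul_conj]
    norm_cast
    rw [Complex.normSq_eq_norm_sq, hcabs]; norm_num
  have hc0 : c ≠ 0 := by
    intro h0; rw [h0, norm_zero] at hcabs; norm_num at hcabs
  have hcc : (starRingEnd ℂ) c * c ^ 2 = c := by
    have : (starRingEnd ℂ) c * c ^ 2 = (c * (starRingEnd ℂ) c) * c := by ring
    rw [this, hcmul, one_mul]
  -- B := c • g is a real matrix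
  set B : Matrix (Fin n) (Fin n) ℂ := c • (g : Matrix (Fin n) (Fin n) ℂ) with hBdef
  have hconjg : ((g : Matrix (Fin n) (Fin n) ℂ)).map (starRingEnd ℂ)
      = (starRingEnd ℂ) a • (g : Matrix (Fin n) (Fin n) ℂ) := by
    have h4 : (starRingEnd ℂ) a • (g : Matrix (Fin n) (Fin n) ℂ)
        = ((starRingEnd ℂ) a * a) • ((g : Matrix (Fin n) (Fin n) ℂ)).map (starRingEnd ℂ) := by
      rw [mul_smul, ← hgb, ← hga]
    rw [h4, mul_comm, hamul, one_smul]
  have hBreal : ∀ i j, (starRingEnd ℂ) (B i j) = B i j := by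
    intro i j
    have h5 : B i j = c * (g : Matrix (Fin n) (Fin n) ℂ) i j := by
      rw [hBdef]; simp [Matrix.smul_apply]
    have hentry : (starRingEnd ℂ) ((g : Matrix (Fin n) (Fin n) ℂ) i j)
        = (starRingEnd ℂ) a * (g : Matrix (Fin n) (Fin n) ℂ) i j := by
      have h6 := congrFun (congrFun hconjg i) j
      simpa [Matrix.map_apply, Matrix.smul_apply] using h6
    calc (starRingEnd ℂ) (B i j)
        = (starRingEnd ℂ) c * (starRingEnd ℂ) ((g : Matrix (Fin n) (Fin n) ℂ) i j) := by
          rw [h5, _root_.map_mul]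
      _ = ((starRingEnd ℂ) c * c ^ 2) * (g : Matrix (Fin n) (Fin n) ℂ) i j := by
          rw [hentry, ← hc]; ring
      _ = c * (g : Matrix (Fin n) (Fin n) ℂ) i j := by rw [hcc]
      _ = B i j := h5.symm
  set Br : Matrix (Fin n) (Fin n) ℝ := fun i j => (B i j).re with hBr
  have hBmap : B = Br.map Complex.ofReal := by
    ext i j
    have h7 := hBreal i j
    rw [Complex.conj_eq_iff_re] at h7
    show B i j = ((B i j).re : ℂ)
    exact h7.symm
  -- determinant of Br
  have hdetB : (Br.det : ℂ) = c ^ n := by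
    rw [← det_map_ofReal, ← hBmap, hBdef, Matrix.det_smul, hdet, mul_one, Fintype.card_fin]
  have hdetBr : Br.det = 1 ∨ Br.det = -1 := by
    have habsn : |Br.det| = 1 := by
      have h8 : ‖((Br.det : ℂ))‖ = 1 := by
        rw [hdetB, norm_pow, hcabs, one_pow]
      rwa [Complex.norm_real, Real.norm_eq_abs] at h8
    rcases abs_eq (by norm_num : (0:ℝ) ≤ 1) |>.mp habsn with h | h
    · exact Or.inl h
    · exact Or.inr h
  refine ⟨c⁻¹, Br, ?_, ?_⟩
  · rcases hdetBr with h | h <;> simp [h]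
  · rw [← hBmap, hBdef, smul_smul, inv_mul_cancel₀ hc0, one_smul]


lemma part2 (hodd : Odd n) (g : (Matrix (Fin n) (Fin n) ℂ)ˣ)
    (h : IsScalarTimesReal n g ({1, -1} : Set ℝ)) :
    IsScalarTimesReal n g ({1} : Set ℝ) := by
  obtain ⟨c, B, hdB, hg⟩ := h
  rcases hdB with h1 | h1
  · exact ⟨c, B, by simp [h1], hg⟩
  · rw [Set.mem_singleton_iff] at h1
    refine ⟨-c, -B, ?_, ?_⟩
    · rw [Set.mem_singleton_iff, Matrix.det_neg, Fintype.card_fin, h1, hodd.neg_one_pow]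
      ring
    · have hneg : (-B).map Complex.ofReal = -(B.map Complex.ofReal) := by
        ext i j; simp [Matrix.map_apply]
      rw [hneg, smul_neg, neg_smul, neg_neg, hg]

lemma part3 (hn : 1 ≤ n) (hev : Even n) :
    ∃ g : (Matrix (Fin n) (Fin n) ℂ)ˣ,
      Matrix.det (g : Matrix (Fin n) (Fin n) ℂ) = 1 ∧
      AdPreservesReal n g ∧ ¬ IsScalarTimesReal n g ({1} : Set ℝ) := by
  have hn0 : n ≠ 0 := by omega
  obtain ⟨c, hc⟩ := IsAlgClosed.exists_pow_nat_eq (-1 : ℂ) (n := n) (by omega)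
  set i0 : Fin n := ⟨0, hn⟩ with hi0
  set d : Fin n → ℝ := fun i => if i = i0 then -1 else 1 with hd
  set Bd : Matrix (Fin n) (Fin n) ℝ := Matrix.diagonal d with hBd
  have hdetd : Bd.det = -1 := by
    rw [hBd, Matrix.det_diagonal]
    rw [Finset.prod_eq_single i0 (fun b _ hb => by simp [hd, hb]) (fun hb => by simp at hb)]
    simp [hd]
  set G : Matrix (Fin n) (Fin n) ℂ := c • Bd.map Complex.ofReal with hG
  have hdetG : G.det = 1 := by
    rw [hG, Matrix.det_smul, Fintype.card_fin, det_map_ofReal, hdetd, hc]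
    norm_num
  have hU : IsUnit G := (Matrix.isUnit_iff_isUnit_det G).mpr (by rw [hdetG]; exact isUnit_one)
  refine ⟨hU.unit, ?_, ?_, ?_⟩
  · rw [hU.unit_spec, hdetG]
  · exact adPreserves_of_scalarReal hU.unit c Bd (by rw [hdetd]; exact isUnit_one.neg)
      hU.unit_spec
  · rintro ⟨c', B', hdB', hg'⟩
    rw [Set.mem_singleton_iff] at hdB'
    rw [hU.unit_spec] at hg'
    -- determinants
    have hdet' : c' ^ n = 1 := by
      have := congrArg Matrix.det hg'
      rw [hdetG, Matrix.det_smul, Fintype.card_fin, det_map_ofReal, hdB'] at this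
      simpa using this.symm
    -- entries at (i0, i0)
    set b : ℝ := B' i0 i0 with hb
    have hentry : -c = c' * (b : ℂ) := by
      have h9 := congrFun (congrFun hg' i0) i0
      rw [hG] at h9
      simp only [Matrix.smul_apply, Matrix.map_apply, smul_eq_mul, hBd,
        Matrix.diagonal_apply_eq, hd] at h9
      rw [← hb] at h9
      push_cast at h9
      rw [mul_comm] at h9
      linear_combination h9
    have hcn : c = c' * (-(b : ℂ)) := by linear_combination -hentry
    have hpow : ((-b : ℝ) ^ n : ℂ) = -1 := by
      have h10 : c ^ n = (c' * (-(b:ℂ))) ^ n := by rw [← hcn]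
      rw [hc, mul_pow, hdet', one_mul] at h10
      push_cast
      exact h10.symm
    have hreal : (-b : ℝ) ^ n = -1 := by
      exact_mod_cast hpow
    have := hev.pow_nonneg (-b)
    linarith

end Stmt7Aux

/-- For `G = Ad(SL(n,ℝ))`, the group
`G̃ = {g ∈ Ad(SL(n,ℂ)) : Ad(g) preserves sl(n,ℝ)}` is `SL(n,ℝ)` for `n` odd and
`Ad(SL(n,ℝ)^±)` for `n` even.  Concretely: an element `g` of `SL(n,ℂ)` preserves
`sl(n,ℝ)` under conjugation iff it is a complex scalar multiple of a real matrix of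
determinant `±1`; if `n` is odd one can always take the real matrix of determinant `1`
(so `G̃ ≅ SL(n,ℝ)`), while for `n` even there is such a `g` that is not a scalar times a
real determinant-one matrix (the determinant `-1` component: `G̃ ≅ Ad(SL(n,ℝ)^±)` is
disconnected). -/
theorem stmt7 (n : ℕ) (hn : 1 ≤ n) :
    (∀ g : (Matrix (Fin n) (Fin n) ℂ)ˣ,
        Matrix.det (g : Matrix (Fin n) (Fin n) ℂ) = 1 →
        (AdPreservesReal n g ↔ IsScalarTimesReal n g ({1, -1} : Set ℝ))) ∧
    (Odd n → ∀ g : (Matrix (Fin n) (Fin n) ℂ)ˣ,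
        Matrix.det (g : Matrix (Fin n) (Fin n) ℂ) = 1 →
        AdPreservesReal n g → IsScalarTimesReal n g ({1} : Set ℝ)) ∧
    (Even n → ∃ g : (Matrix (Fin n) (Fin n) ℂ)ˣ,
        Matrix.det (g : Matrix (Fin n) (Fin n) ℂ) = 1 ∧
        AdPreservesReal n g ∧ ¬ IsScalarTimesReal n g ({1} : Set ℝ)) := by
  refine ⟨fun g hdet => ⟨Stmt7Aux.scalarReal_of_adPreserves hn g hdet, fun h => ?_⟩,
    fun hodd g hdet hAd => Stmt7Aux.part2 hodd g
      (Stmt7Aux.scalarReal_of_adPreserves hn g hdet hAd),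
    fun hev => Stmt7Aux.part3 hn hev⟩
  obtain ⟨c, B, hdB, hg⟩ := h
  have hu : IsUnit B.det := by
    rcases hdB with h1 | h1
    · rw [h1]; exact isUnit_one
    · rw [Set.mem_singleton_iff] at h1; rw [h1]; exact isUnit_one.neg
  exact Stmt7Aux.adPreserves_of_scalarReal g c B hu hg
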